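/- Let K ⊆ ℝ^{n+s} be a centrally symmetric convex body symmetric with respect to ℝⁿ (the first n coordinates). If (x,y) ∈ S(K,t), then (x,0) ∈ S(K,t), where S(K,t) = {z ∈ int(K) : Vol(K)·Vol((K−z)°) ≤ t·Vol(B₂^{n+s})²}. -/

import Mathlib

open MeasureTheory

/-- The polar body `K° = {y : ⟨y,x⟩ ≤ 1 for all x ∈ K}`. -/
def polarBody {m : ℕ} (K : Set (EuclideanSpace ℝ (Fin m))) : Set (EuclideanSpace ℝ (Fin m)) :=
  {y | ∀ x ∈ K, (inner ℝ y x : ℝ) ≤ 1}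

/-- Reflection of `ℝ^{n+s}` fixing the first `n` coordinates and negating the rest. -/
def reflLast (n s : ℕ) (z : EuclideanSpace ℝ (Fin (n + s))) : EuclideanSpace ℝ (Fin (n + s)) :=
  WithLp.toLp 2 (fun i : Fin (n + s) => if (i : ℕ) < n then z i else -z i)

/-- `(a,b) ↦ (a,0)`: zeroing out the last `s` coordinates. -/
def projFirst (n s : ℕ) (z : EuclideanSpace ℝ (Fin (n + s))) : EuclideanSpace ℝ (Fin (n + s)) :=
  WithLp.toLp 2 (fun i : Fin (n + s) => if (i : ℕ) < n then z i else 0)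

/-- The Santaló region of a convex body `K`:
`S(K,t) = {z ∈ int K : Vol(K)·Vol((K−z)°) ≤ t·Vol(B₂^{n+s})²}`. -/
noncomputable def santaloRegionBody {m : ℕ} (K : Set (EuclideanSpace ℝ (Fin m))) (t : ℝ) :
    Set (EuclideanSpace ℝ (Fin m)) :=
  {z ∈ interior K | volume K * volume (polarBody ((fun x => x - z) '' K))
      ≤ ENNReal.ofReal t * volume (Metric.ball (0 : EuclideanSpace ℝ (Fin m)) 1) ^ 2}

section Aux

open scoped ENNReal

variable {n s : ℕ}

lemma reflLast_invol (x : EuclideanSpace ℝ (Fin (n + s))) :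
    reflLast n s (reflLast n s x) = x := by
  ext i; simp [reflLast]; split <;> simp

lemma reflLast_add (a b : EuclideanSpace ℝ (Fin (n + s))) :
    reflLast n s (a + b) = reflLast n s a + reflLast n s b := by
  ext i; simp [reflLast, PiLp.add_apply]; split <;> ring

lemma reflLast_smul (c : ℝ) (a : EuclideanSpace ℝ (Fin (n + s))) :
    reflLast n s (c • a) = c • reflLast n s a := by
  ext i; simp only [reflLast, PiLp.smul_apply, smul_eq_mul]; split <;> ring

lemma reflLast_inner_left (u x : EuclideanSpace ℝ (Fin (n + s))) :
    (inner ℝ (reflLast n s u) x : ℝ) = inner ℝ u (reflLast n s x) := by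
  simp only [PiLp.inner_apply, RCLike.inner_apply, conj_trivial]
  refine Finset.sum_congr rfl fun i _ => ?_
  simp only [reflLast]; split <;> ring

lemma reflLast_inner (u x : EuclideanSpace ℝ (Fin (n + s))) :
    (inner ℝ (reflLast n s u) (reflLast n s x) : ℝ) = inner ℝ u x := by
  rw [reflLast_inner_left, reflLast_invol]

noncomputable def reflLI (n s : ℕ) :
    EuclideanSpace ℝ (Fin (n + s)) ≃ₗᵢ[ℝ] EuclideanSpace ℝ (Fin (n + s)) :=
  LinearEquiv.isometryOfInner
    { toFun := reflLast n s
      invFun := reflLast n s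
      map_add' := reflLast_add
      map_smul' := reflLast_smul
      left_inv := reflLast_invol
      right_inv := reflLast_invol }
    (fun x y => reflLast_inner x y)

@[simp] lemma reflLI_apply (x : EuclideanSpace ℝ (Fin (n + s))) :
    reflLI n s x = reflLast n s x := rfl
lemma mem_polar_sub {m : ℕ} {C : Set (EuclideanSpace ℝ (Fin m))} {p u : EuclideanSpace ℝ (Fin m)} :
    u ∈ polarBody ((fun x => x - p) '' C) ↔ ∀ k ∈ C, (inner ℝ u k : ℝ) ≤ 1 + (inner ℝ u p : ℝ) := by
  constructor
  · intro h k hk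
    have := h _ ⟨k, hk, rfl⟩
    rw [inner_sub_right] at this; linarith
  · rintro h x ⟨k, hk, rfl⟩
    rw [inner_sub_right]
    have := h k hk; linarith

lemma isClosed_polarBody {m : ℕ} (S : Set (EuclideanSpace ℝ (Fin m))) :
    IsClosed (polarBody S) := by
  have : polarBody S = ⋂ x ∈ S, {y : EuclideanSpace ℝ (Fin m) | (inner ℝ y x : ℝ) ≤ 1} := by
    ext y; simp [polarBody]
  rw [this]
  exact isClosed_biInter fun x _ =>
    isClosed_le (Continuous.inner continuous_id continuous_const) continuous_const

lemma det_id_add_smulRight {m : ℕ} (a b : ℝ) (v u : EuclideanSpace ℝ (Fin m)) (ha : a ≠ 0) :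
    (a • ContinuousLinearMap.id ℝ (EuclideanSpace ℝ (Fin m))
      + ((b • (innerSL ℝ v : EuclideanSpace ℝ (Fin m) →L[ℝ] ℝ)).smulRight u)).det
      = a ^ m * (1 + a⁻¹ * b * (inner ℝ v u : ℝ)) := by
  classical
  set L := (a • ContinuousLinearMap.id ℝ (EuclideanSpace ℝ (Fin m))
      + ((b • (innerSL ℝ v : EuclideanSpace ℝ (Fin m) →L[ℝ] ℝ)).smulRight u)) with hL
  have hdet : L.det = LinearMap.det (L : EuclideanSpace ℝ (Fin m) →ₗ[ℝ] EuclideanSpace ℝ (Fin m)) := rfl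
  rw [hdet, ← LinearMap.det_toMatrix ((EuclideanSpace.basisFun (Fin m) ℝ).toBasis)]
  have hM : (LinearMap.toMatrix ((EuclideanSpace.basisFun (Fin m) ℝ).toBasis)
      ((EuclideanSpace.basisFun (Fin m) ℝ).toBasis)) (L : _ →ₗ[ℝ] _)
      = a • (1 + Matrix.replicateCol (Fin 1) (fun i => u i) * Matrix.replicateRow (Fin 1) (fun j => a⁻¹ * b * v j)) := by
    ext i j
    rw [LinearMap.toMatrix_apply]
    simp only [OrthonormalBasis.coe_toBasis, EuclideanSpace.basisFun_apply,
      OrthonormalBasis.coe_toBasis_repr_apply, EuclideanSpace.basisFun_repr, hL]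
    simp only [ContinuousLinearMap.coe_coe, ContinuousLinearMap.add_apply,
      ContinuousLinearMap.coe_smul', Pi.smul_apply, ContinuousLinearMap.coe_id', id_eq,
      ContinuousLinearMap.smulRight_apply, ContinuousLinearMap.smul_apply,
      EuclideanSpace.inner_single_right, conj_trivial, one_mul]
    simp only [PiLp.add_apply, PiLp.smul_apply, smul_eq_mul, Matrix.smul_apply,
      Matrix.add_apply, Matrix.one_apply, Matrix.mul_apply, Matrix.replicateCol_apply, Matrix.replicateRow_apply,
      Finset.sum_const, Finset.card_univ, Fintype.card_fin, one_smul,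
      EuclideanSpace.single_apply]
    by_cases h : i = j <;> simp [h, EuclideanSpace.inner_single_right] <;> field_simp <;> ring
  rw [hM, Matrix.det_smul]
  erw [Matrix.det_one_add_replicateCol_mul_replicateRow]
  simp only [Fintype.card_fin, dotProduct]
  have hinner : (inner ℝ v u : ℝ) = ∑ i, v i * u i := by
    simp [PiLp.inner_apply, RCLike.inner_apply, conj_trivial, mul_comm]
  rw [hinner, Finset.mul_sum]
  simp [mul_assoc]

lemma hasFDerivAt_projmap {m : ℕ} (v u : EuclideanSpace ℝ (Fin m))
    (h : (1 : ℝ) - (inner ℝ v u : ℝ) ≠ 0) :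
    HasFDerivAt (fun y : EuclideanSpace ℝ (Fin m) => ((1 : ℝ) - (inner ℝ v y : ℝ))⁻¹ • y)
      ((((1:ℝ) - (inner ℝ v u : ℝ))⁻¹) • ContinuousLinearMap.id ℝ (EuclideanSpace ℝ (Fin m))
        + ((((1:ℝ) - (inner ℝ v u : ℝ))^2)⁻¹ • (innerSL ℝ v : EuclideanSpace ℝ (Fin m) →L[ℝ] ℝ)).smulRight u) u := by
  have hg : HasFDerivAt (fun y : EuclideanSpace ℝ (Fin m) => (1:ℝ) - (inner ℝ v y : ℝ))
      ((0 : EuclideanSpace ℝ (Fin m) →L[ℝ] ℝ) - innerSL ℝ v) u :=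
    (hasFDerivAt_const (1:ℝ) u).sub ((innerSL ℝ v).hasFDerivAt)
  have hinv : HasFDerivAt (fun y : EuclideanSpace ℝ (Fin m) => ((1:ℝ) - (inner ℝ v y : ℝ))⁻¹)
      ((-(((1:ℝ) - (inner ℝ v u : ℝ))^2)⁻¹) • ((0 : EuclideanSpace ℝ (Fin m) →L[ℝ] ℝ) - innerSL ℝ v)) u :=
    (hasDerivAt_inv h).comp_hasFDerivAt u hg
  have := hinv.smul (hasFDerivAt_id u)
  rw [zero_sub, neg_smul_neg] at this
  exact this

lemma two_le_inv_add_inv {m : ℕ} {c : ℝ} (h1 : -1 < c) (h2 : c < 1) :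
    (2:ℝ) ≤ ((1 - c)^m)⁻¹ + ((1 + c)^m)⁻¹ := by
  have h1c : (0:ℝ) < 1 - c := by linarith
  have h2c : (0:ℝ) < 1 + c := by linarith
  set a := (1-c)^m with hadef
  set b := (1+c)^m with hbdef
  have ha : 0 < a := pow_pos h1c m
  have hb : 0 < b := pow_pos h2c m
  have hprod : a * b ≤ 1 := by
    rw [hadef, hbdef, ← mul_pow]
    exact pow_le_one₀ (by nlinarith) (by nlinarith [sq_nonneg c])
  have key : 2 * (a * b) ≤ a + b := by
    by_contra hcon
    push_neg at hcon
    have hpos : 0 < a + b := by linarith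
    have h2' : (a+b)^2 < (2*(a*b))^2 := by nlinarith [mul_pos ha hb]
    have h3 : 0 ≤ 4*(a*b)*(1 - a*b) := mul_nonneg (by positivity) (by linarith)
    nlinarith [sq_nonneg (a - b)]
  rw [inv_add_inv ha.ne' hb.ne', le_div_iff₀ (mul_pos ha hb)]
  linarith

lemma volume_polar_shift_le {n s : ℕ} (K : Set (EuclideanSpace ℝ (Fin (n + s))))
    (hrefl : ∀ x, x ∈ K ↔ reflLast n s x ∈ K)
    {z : EuclideanSpace ℝ (Fin (n + s))} (hz : z ∈ interior K)
    (hRz : reflLast n s z ∈ interior K) :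
    volume (polarBody ((fun x => x - projFirst n s z) '' K))
      ≤ volume (polarBody ((fun x => x - z) '' K)) := by
  classical
  set w : EuclideanSpace ℝ (Fin (n + s)) := projFirst n s z with hwdef
  set v : EuclideanSpace ℝ (Fin (n + s)) := z - w with hvdef
  set B : Set (EuclideanSpace ℝ (Fin (n + s))) := polarBody ((fun x => x - w) '' K) with hBdef
  set A : Set (EuclideanSpace ℝ (Fin (n + s))) := polarBody ((fun x => x - z) '' K) with hAdef
  -- pointwise identities
  have hRw : reflLast n s w = w := by
    ext i
    simp only [reflLast, projFirst, hwdef]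
    split <;> simp
  have hRz' : reflLast n s z = w - v := by
    ext i
    have : (w - v) i = w i - v i := rfl
    rw [this]
    have hv : v i = z i - w i := rfl
    rw [hv]
    simp only [reflLast, projFirst, hwdef]
    split <;> ring
  have hRv : reflLast n s v = -v := by
    ext i
    have hv : v i = z i - w i := rfl
    have : (-v) i = -(v i) := rfl
    rw [this]
    simp only [reflLast, hv, projFirst, hwdef]
    split <;> ring
  have hvu : ∀ u : EuclideanSpace ℝ (Fin (n + s)),
      (inner ℝ v u : ℝ) = inner ℝ u z - inner ℝ u w := by
    intro u
    rw [hvdef, inner_sub_left, real_inner_comm z u, real_inner_comm w u]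
  -- strict bound from interior points
  have hsup : ∀ p, p ∈ interior K → ∀ u, u ∈ B → (inner ℝ u p : ℝ) < 1 + (inner ℝ u w : ℝ) := by
    intro p hp u hu
    rcases eq_or_ne u 0 with rfl | hune
    · simp
    · obtain ⟨ε, hε, hball⟩ := Metric.mem_nhds_iff.mp (mem_interior_iff_mem_nhds.mp hp)
      have hnorm : (0:ℝ) < ‖u‖ := norm_pos_iff.mpr hune
      have hk : p + (ε/2 * ‖u‖⁻¹) • u ∈ K := by
        apply hball
        rw [Metric.mem_ball, dist_self_add_left, norm_smul, Real.norm_eq_abs,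
          abs_of_pos (by positivity)]
        rw [mul_assoc, inv_mul_cancel₀ hnorm.ne', mul_one]
        linarith
      have hb := (mem_polar_sub.mp hu) _ hk
      rw [inner_add_right, real_inner_smul_right, real_inner_self_eq_norm_sq] at hb
      have hpos : (0:ℝ) < ε/2 * ‖u‖⁻¹ * ‖u‖^2 := by positivity
      linarith
  have hlt1 : ∀ u, u ∈ B → (inner ℝ v u : ℝ) < 1 := by
    intro u hu
    have h1 := hsup z hz u hu
    rw [hvu u]
    linarith
  have hlt2 : ∀ u, u ∈ B → (-1:ℝ) < (inner ℝ v u : ℝ) := by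
    intro u hu
    have h1 := hsup _ (hRz' ▸ hRz) u hu
    have h2 : (inner ℝ u (w - v) : ℝ) = inner ℝ u w - inner ℝ v u := by
      rw [inner_sub_right, real_inner_comm u v]
    rw [h2] at h1
    linarith
  have hBclosed : IsClosed B := isClosed_polarBody _
  have hBmeas : MeasurableSet B := hBclosed.measurableSet
  -- the projective map and its derivative
  set T : EuclideanSpace ℝ (Fin (n + s)) → EuclideanSpace ℝ (Fin (n + s)) :=
    fun y => ((1:ℝ) - (inner ℝ v y : ℝ))⁻¹ • y with hTdef
  set D : EuclideanSpace ℝ (Fin (n + s)) →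
      (EuclideanSpace ℝ (Fin (n + s)) →L[ℝ] EuclideanSpace ℝ (Fin (n + s))) :=
    fun u => (((1:ℝ) - (inner ℝ v u : ℝ))⁻¹) • ContinuousLinearMap.id ℝ (EuclideanSpace ℝ (Fin (n + s)))
        + ((((1:ℝ) - (inner ℝ v u : ℝ))^2)⁻¹ •
            (innerSL ℝ v : EuclideanSpace ℝ (Fin (n + s)) →L[ℝ] ℝ)).smulRight u with hDdef
  have hone : ∀ u, u ∈ B → (0:ℝ) < 1 - inner ℝ v u := fun u hu => by
    have := hlt1 u hu; linarith
  have hderiv : ∀ u ∈ B, HasFDerivWithinAt T (D u) B u := fun u hu =>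
    (hasFDerivAt_projmap v u (hone u hu).ne').hasFDerivWithinAt
  have hinj : Set.InjOn T B := by
    intro u hu u' hu' he
    have h1 := hone u hu
    have h1' := hone u' hu'
    have hinner : ((1:ℝ) - inner ℝ v u)⁻¹ * inner ℝ v u = ((1:ℝ) - inner ℝ v u')⁻¹ * inner ℝ v u' := by
      have h := congrArg (fun y => (inner ℝ v y : ℝ)) he
      simp only [hTdef, real_inner_smul_right] at h
      exact h
    have hfrac : ∀ x y : ℝ, x < 1 → y < 1 → (1-x)⁻¹ * x = (1-y)⁻¹ * y → x = y := by
      intro x y hx hy h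
      have hx0 : (1:ℝ) - x ≠ 0 := by intro h0; linarith [h0]
      have hy0 : (1:ℝ) - y ≠ 0 := by intro h0; linarith [h0]
      field_simp at h
      linear_combination h
    have hcc : (inner ℝ v u : ℝ) = inner ℝ v u' := hfrac _ _ (hlt1 u hu) (hlt1 u' hu') hinner
    rw [hTdef] at he
    simp only [hcc] at he
    exact smul_right_injective _ (inv_ne_zero (by rw [← hcc] at h1' ⊢; exact h1.ne')) he
  have himg : T '' B ⊆ A := by
    rintro x ⟨u, hu, rfl⟩
    rw [hAdef, mem_polar_sub]
    intro k hk
    have h1 := hone u hu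
    have hk' := (mem_polar_sub.mp hu) k hk
    have hz' : (inner ℝ u z : ℝ) = inner ℝ u w + inner ℝ v u := by
      rw [hvu u]; ring
    rw [hTdef]
    simp only [real_inner_smul_left]
    have h2 : ((1:ℝ) - inner ℝ v u)⁻¹ * (inner ℝ u k - inner ℝ u z) ≤ 1 := by
      have hstep : (inner ℝ u k : ℝ) - inner ℝ u z ≤ 1 - inner ℝ v u := by
        rw [hz']; linarith
      have := mul_le_mul_of_nonneg_left hstep (inv_nonneg.mpr h1.le)
      rwa [inv_mul_cancel₀ h1.ne'] at this
    have hexp : ((1:ℝ) - inner ℝ v u)⁻¹ * inner ℝ u k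
        = ((1:ℝ) - inner ℝ v u)⁻¹ * (inner ℝ u k - inner ℝ u z)
          + ((1:ℝ) - inner ℝ v u)⁻¹ * inner ℝ u z := by ring
    rw [hexp]
    linarith
  -- the integrand
  set F : EuclideanSpace ℝ (Fin (n + s)) → ENNReal :=
    fun u => ENNReal.ofReal (((1 - (inner ℝ v u : ℝ))^(n + s + 1))⁻¹) with hFdef
  have hFmeas : Measurable F := by
    apply Measurable.ennreal_ofReal
    apply Measurable.inv
    exact ((continuous_const.sub (continuous_const.inner continuous_id)).pow _).measurable
  have hdetval : ∀ u, u ∈ B → ENNReal.ofReal |(D u).det| = F u := by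
    intro u hu
    have h1 := hone u hu
    have hdet : (D u).det = ((1 - (inner ℝ v u:ℝ))^(n + s + 1))⁻¹ := by
      rw [hDdef]
      simp only
      rw [det_id_add_smulRight _ _ _ _ (inv_ne_zero h1.ne')]
      have key : ∀ d c' : ℝ, d ≠ 0 → d + c' = 1 →
          (d⁻¹)^(n + s) * (1 + (d⁻¹)⁻¹ * (d^2)⁻¹ * c') = (d^(n + s + 1))⁻¹ := by
        intro d c' hd hsum
        have hc' : c' = 1 - d := by linarith
        subst hc'
        rw [inv_inv]
        have hmid : 1 + d * (d^2)⁻¹ * (1 - d) = d⁻¹ := by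
          field_simp
          ring
        rw [hmid, inv_pow, ← mul_inv, ← pow_succ]
      exact key _ _ h1.ne' (by ring)
    rw [hFdef]
    simp only
    rw [hdet, abs_of_pos (by positivity)]
  -- change of variables
  have cov := lintegral_image_eq_lintegral_abs_det_fderiv_mul volume hBmeas hderiv hinj
      (fun _ => (1:ℝ≥0∞))
  simp only [setLIntegral_one, mul_one] at cov
  have hTB : volume (T '' B) = ∫⁻ u in B, F u := by
    rw [cov]
    apply setLIntegral_congr_fun hBmeas
    intro u hu
    exact hdetval u hu
  -- symmetry of B under reflLast
  have hRBsub : ∀ u, u ∈ B → reflLast n s u ∈ B := by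
    intro u hu
    rw [hBdef, mem_polar_sub]
    intro k hk
    have h1 : (inner ℝ (reflLast n s u) k : ℝ) = inner ℝ u (reflLast n s k) := reflLast_inner_left u k
    have h2 : (inner ℝ (reflLast n s u) w : ℝ) = inner ℝ u w := by
      rw [reflLast_inner_left, hRw]
    rw [h1, h2]
    exact (mem_polar_sub.mp hu) _ ((hrefl k).mp hk)
  have hRB : ∀ u, u ∈ B ↔ reflLast n s u ∈ B := by
    intro u
    refine ⟨hRBsub u, fun h => ?_⟩
    have := hRBsub _ h
    rwa [reflLast_invol] at this
  have hpre : (⇑(reflLI n s)) ⁻¹' B = B := by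
    ext u
    simp only [Set.mem_preimage, reflLI_apply]
    exact (hRB u).symm
  have hmp := (reflLI n s).measurePreserving
  have hemb : MeasurableEmbedding (⇑(reflLI n s)) :=
    (reflLI n s).toHomeomorph.measurableEmbedding
  have hsym : ∫⁻ u in B, F (reflLast n s u) = ∫⁻ u in B, F u := by
    have h := hmp.setLIntegral_comp_preimage_emb hemb F B
    rw [hpre] at h
    simpa using h
  -- F (R u) in terms of inner
  have hFR : ∀ u, F (reflLast n s u)
      = ENNReal.ofReal (((1 + (inner ℝ v u : ℝ))^(n + s + 1))⁻¹) := by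
    intro u
    have hnegc : (inner ℝ v (reflLast n s u) : ℝ) = - inner ℝ v u := by
      have e1 : (inner ℝ v (reflLast n s u) : ℝ) = inner ℝ (reflLast n s u) v :=
        real_inner_comm _ _
      have e2 : (inner ℝ (reflLast n s u) v : ℝ) = inner ℝ u (reflLast n s v) :=
        reflLast_inner_left u v
      have e3 : (inner ℝ u (-v) : ℝ) = - inner ℝ v u := by
        rw [inner_neg_right, real_inner_comm u v]
      rw [e1, e2, hRv, e3]
    rw [hFdef]
    simp only
    rw [hnegc, sub_neg_eq_add]
  -- lower bound : volume B ≤ ∫ F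
  have hFRmeas : Measurable (fun u => F (reflLast n s u)) :=
    hFmeas.comp (reflLI n s).continuous.measurable
  have hdouble : 2 * volume B ≤ (∫⁻ u in B, F u) + ∫⁻ u in B, F (reflLast n s u) := by
    rw [← lintegral_add_left hFmeas]
    rw [← setLIntegral_const B (2:ℝ≥0∞)]
    apply setLIntegral_mono (hFmeas.add hFRmeas)
    intro x hx
    rw [Pi.add_apply, hFR x]
    have hx1 := hlt1 x hx
    have hx2 := hlt2 x hx
    have hle := two_le_inv_add_inv (m := n + s + 1) hx2 hx1
    have h1c : (0:ℝ) < 1 - inner ℝ v x := by linarith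
    have h2c : (0:ℝ) < 1 + inner ℝ v x := by linarith
    rw [hFdef]
    simp only
    rw [← ENNReal.ofReal_add (by positivity) (by positivity)]
    calc (2:ℝ≥0∞) = ENNReal.ofReal 2 := by norm_num
      _ ≤ _ := ENNReal.ofReal_le_ofReal hle
  rw [hsym, ← two_mul] at hdouble
  have hlow : volume B ≤ ∫⁻ u in B, F u := by
    rwa [ENNReal.mul_le_mul_iff_right (by norm_num) (by norm_num)] at hdouble
  calc volume B ≤ ∫⁻ u in B, F u := hlow
    _ = volume (T '' B) := hTB.symm
    _ ≤ volume A := measure_mono himg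

end Aux

/-- For `K ⊆ ℝ^{n+s}` a centrally symmetric convex body symmetric with respect to ℝⁿ,
if `(x,y) ∈ S(K,t)` then `(x,0) ∈ S(K,t)`. -/
theorem stmt13 {n s : ℕ} (K : Set (EuclideanSpace ℝ (Fin (n + s))))
    (hconv : Convex ℝ K) (hcomp : IsCompact K)
    (h0 : (0 : EuclideanSpace ℝ (Fin (n + s))) ∈ interior K)
    (hsymm : ∀ x, x ∈ K ↔ -x ∈ K)
    (hrefl : ∀ x, x ∈ K ↔ reflLast n s x ∈ K)
    (t : ℝ) (z : EuclideanSpace ℝ (Fin (n + s)))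
    (hz : z ∈ santaloRegionBody K t) :
    projFirst n s z ∈ santaloRegionBody K t := by
  obtain ⟨hz1, hz2⟩ := hz
  have hRz : reflLast n s z ∈ interior K := by
    have hsub : ⇑(reflLI n s) '' interior K ⊆ K := by
      rintro x ⟨y, hy, rfl⟩
      exact (hrefl y).mp (interior_subset hy)
    have hopen : IsOpen (⇑(reflLI n s) '' interior K) :=
      (reflLI n s).toHomeomorph.isOpenMap _ isOpen_interior
    exact interior_maximal hsub hopen ⟨z, hz1, rfl⟩
  have hw : projFirst n s z ∈ interior K := by
    have heq : projFirst n s z = ((1:ℝ)/2) • z + ((1:ℝ)/2) • reflLast n s z := by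
      ext i
      have h1 : (((1:ℝ)/2) • z + ((1:ℝ)/2) • reflLast n s z) i
          = (1/2) * z i + (1/2) * (reflLast n s z i) := rfl
      rw [h1]
      simp only [projFirst, reflLast]
      split <;> ring
    rw [heq]
    exact hconv.interior hz1 hRz (by norm_num) (by norm_num) (by norm_num)
  refine ⟨hw, ?_⟩
  exact le_trans (mul_le_mul_right (volume_polar_shift_le K hrefl hz1 hRz) _) hz2
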